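/- For every natural number n and complex number a with (2a-2)_k ≠ 0 for 0 ≤ k ≤ 2n and a-1 ≠ 0, ∑_{k=0}^{2n} (-2n)_k (a)_k 2^k / ((2a-2)_k k!) = ((1/2)_n / (a-1/2)_n) · (1 + 2n/(a-1)). -/

import Mathlib

open Finset

/-- The Pochhammer symbol (rising factorial) `(x)_k = x (x+1) ⋯ (x+k-1)`. -/
noncomputable def poch (x : ℂ) (k : ℕ) : ℂ := (ascPochhammer ℂ k).eval x

lemma poch_zero (x : ℂ) : poch x 0 = 1 := by simp [poch]

lemma poch_succ (x : ℂ) (k : ℕ) : poch x (k+1) = poch x k * (x + k) := by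
  simp [poch, ascPochhammer_succ_right]

lemma poch_succ_left (x : ℂ) (k : ℕ) : poch x (k+1) = x * poch (x+1) k := by
  simp [poch, ascPochhammer_succ_left, Polynomial.eval_comp]

lemma poch_eq_prod (x : ℂ) (k : ℕ) : poch x k = ∏ i ∈ range k, (x + i) := by
  induction k with
  | zero => simp [poch]
  | succ k ih => rw [poch_succ, ih, prod_range_succ]

lemma poch_shift2 (y : ℂ) (k : ℕ) :
    poch (y-2) k * (y-2+k) * (y-1+k) = (y-2)*(y-1) * poch y k := by
  have h1 : poch (y-2) (k+2) = poch (y-2) k * (y-2+k) * (y-1+k) := by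
    rw [poch_succ, poch_succ]; push_cast; ring
  have h2 : poch (y-2) (k+2) = (y-2)*(y-1) * poch y k := by
    rw [poch_succ_left, poch_succ_left]
    ring_nf
  rw [← h1, h2]

lemma poch_neg_nat_zero (m k : ℕ) (h : m < k) : poch (-(m:ℂ)) k = 0 := by
  rw [poch_eq_prod]
  exact Finset.prod_eq_zero (mem_range.mpr h) (by simp)

lemma poch_factor_ne_zero {x : ℂ} {k : ℕ} (h : poch x k ≠ 0) {i : ℕ} (hi : i < k) :
    x + i ≠ 0 := by
  rw [poch_eq_prod] at h
  exact Finset.prod_ne_zero_iff.mp h i (mem_range.mpr hi)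

noncomputable def FA (a : ℂ) (n k : ℕ) : ℂ :=
  poch (-(2*n : ℂ)) k * poch (a-1) k * 2^k / (poch (2*a-2) k * (k.factorial : ℂ))

lemma FA_top_zero (a : ℂ) (n k : ℕ) (h : 2*n < k) : FA a n k = 0 := by
  have : poch (-(2*n : ℂ)) k = 0 := by
    have := poch_neg_nat_zero (2*n) k h
    push_cast at this ⊢
    exact this
  simp [FA, this]

-- generic-k certificate identity I
lemma keyI (a : ℂ) (n k : ℕ) (hv : poch (2*a-2) (k+1) ≠ 0) :
    (2*(n:ℂ)+1)*(2*n+2) * FA a n k - (2*n+2)*(2*a+2*n-1) * FA a (n+1) k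
    = ((k:ℂ)+1)*((k:ℂ)+2*a-2) * FA a (n+1) (k+1) - (k:ℂ)*((k:ℂ)+2*a-3) * FA a (n+1) k := by
  have hV : poch (2*a-2) k ≠ 0 := by
    rw [poch_succ] at hv; exact left_ne_zero_of_mul hv
  have hx : (2*a-2) + k ≠ 0 := by
    rw [poch_succ] at hv; exact right_ne_zero_of_mul hv
  have hf : (k.factorial : ℂ) ≠ 0 := Nat.cast_ne_zero.mpr k.factorial_ne_zero
  have hk1 : ((k:ℂ)+1) ≠ 0 := by
    have : ((k+1:ℕ):ℂ) ≠ 0 := Nat.cast_ne_zero.mpr (Nat.succ_ne_zero k)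
    push_cast at this; exact this
  have hn1 : (2*(n:ℂ)+1) ≠ 0 := by
    have : ((2*n+1:ℕ):ℂ) ≠ 0 := Nat.cast_ne_zero.mpr (by omega)
    push_cast at this; exact this
  have hn2 : (2*(n:ℂ)+2) ≠ 0 := by
    have : ((2*n+2:ℕ):ℂ) ≠ 0 := Nat.cast_ne_zero.mpr (by omega)
    push_cast at this; exact this
  -- shift lemma: p * stuff = P * stuff
  have f1 := poch_shift2 (-(2*(n:ℂ))) k
  -- f1 : poch (-(2n)-2) k * (-(2n)-2+k) * (-(2n)-1+k) = (-(2n)-2)*(-(2n)-1)*poch (-(2n)) k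
  have hp : poch (-(2*(n:ℂ))) k
      = poch (-(2*(n:ℂ))-2) k * ((k:ℂ)-2*n-2) * ((k:ℂ)-2*n-1) / ((2*(n:ℂ)+1)*(2*n+2)) := by
    rw [eq_div_iff (by exact mul_ne_zero hn1 hn2)]
    linear_combination -f1
  have e1 : (-(2*((n:ℂ)+1))) = (-(2*(n:ℂ))-2) := by ring
  have f2 : poch (-(2*(n:ℂ))-2) (k+1) = poch (-(2*(n:ℂ))-2) k * ((-(2*(n:ℂ))-2) + k) :=
    poch_succ _ k
  have f3 : poch (a-1) (k+1) = poch (a-1) k * ((a-1) + k) := poch_succ _ k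
  have f4 : poch (2*a-2) (k+1) = poch (2*a-2) k * ((2*a-2) + k) := poch_succ _ k
  have f5 : ((k+1).factorial : ℂ) = ((k:ℂ)+1) * (k.factorial : ℂ) := by
    rw [Nat.factorial_succ]; push_cast; ring
  simp only [FA]
  push_cast
  rw [e1, hp, f2, f3, f4, f5]
  have hx' : 2*(a-1)+(k:ℂ) ≠ 0 := by intro hc; apply hx; linear_combination hc
  have hV' : poch (2*(a-1)) k ≠ 0 := by rw [show 2*(a-1) = 2*a-2 by ring]; exact hV
  field_simp
  ring

-- generic-k certificate identity II
lemma keyII (a : ℂ) (n k : ℕ) (hv : poch (2*a-2) (k+1) ≠ 0) :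
    (2*(n:ℂ)+1)*(2*n+2)*((k:ℂ)-2*a+5) * FA a n k
      + ((2*(n:ℂ)+2)*(4*(a-1)^2+(4*n-2)*(a-1)-3*(2*n+1))
          - 2*(2*(n:ℂ)+1)*(a-1+n)*(k:ℂ)) * FA a (n+1) k
    = ((k:ℂ)+1)*(((k:ℂ)+1)^2-(2*a-3)^2) * FA a (n+1) (k+1)
      - (k:ℂ)*((k:ℂ)^2-(2*a-3)^2) * FA a (n+1) k := by
  have hV : poch (2*a-2) k ≠ 0 := by
    rw [poch_succ] at hv; exact left_ne_zero_of_mul hv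
  have hx : (2*a-2) + k ≠ 0 := by
    rw [poch_succ] at hv; exact right_ne_zero_of_mul hv
  have hf : (k.factorial : ℂ) ≠ 0 := Nat.cast_ne_zero.mpr k.factorial_ne_zero
  have hk1 : ((k:ℂ)+1) ≠ 0 := by
    have : ((k+1:ℕ):ℂ) ≠ 0 := Nat.cast_ne_zero.mpr (Nat.succ_ne_zero k)
    push_cast at this; exact this
  have hn1 : (2*(n:ℂ)+1) ≠ 0 := by
    have : ((2*n+1:ℕ):ℂ) ≠ 0 := Nat.cast_ne_zero.mpr (by omega)
    push_cast at this; exact this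
  have hn2 : (2*(n:ℂ)+2) ≠ 0 := by
    have : ((2*n+2:ℕ):ℂ) ≠ 0 := Nat.cast_ne_zero.mpr (by omega)
    push_cast at this; exact this
  have f1 := poch_shift2 (-(2*(n:ℂ))) k
  have hp : poch (-(2*(n:ℂ))) k
      = poch (-(2*(n:ℂ))-2) k * ((k:ℂ)-2*n-2) * ((k:ℂ)-2*n-1) / ((2*(n:ℂ)+1)*(2*n+2)) := by
    rw [eq_div_iff (by exact mul_ne_zero hn1 hn2)]
    linear_combination -f1
  have e1 : (-(2*((n:ℂ)+1))) = (-(2*(n:ℂ))-2) := by ring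
  have f2 : poch (-(2*(n:ℂ))-2) (k+1) = poch (-(2*(n:ℂ))-2) k * ((-(2*(n:ℂ))-2) + k) :=
    poch_succ _ k
  have f3 : poch (a-1) (k+1) = poch (a-1) k * ((a-1) + k) := poch_succ _ k
  have f4 : poch (2*a-2) (k+1) = poch (2*a-2) k * ((2*a-2) + k) := poch_succ _ k
  have f5 : ((k+1).factorial : ℂ) = ((k:ℂ)+1) * (k.factorial : ℂ) := by
    rw [Nat.factorial_succ]; push_cast; ring
  simp only [FA]
  push_cast
  rw [e1, hp, f2, f3, f4, f5]
  have hx' : 2*(a-1)+(k:ℂ) ≠ 0 := by intro hc; apply hx; linear_combination hc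
  have hV' : poch (2*(a-1)) k ≠ 0 := by rw [show 2*(a-1) = 2*a-2 by ring]; exact hV
  field_simp
  ring

lemma AW (a : ℂ) (n : ℕ) (h : ∀ k ≤ 2*n, poch (2*a-2) k ≠ 0) :
    (∑ k ∈ range (2*n+1), FA a n k) * poch (a-1/2) n = poch ((1:ℂ)/2) n ∧
    ∑ k ∈ range (2*n+1), (k:ℂ) * FA a n k
      = 2*n * ∑ k ∈ range (2*n+1), FA a n k := by
  induction n with
  | zero => norm_num [FA, poch]
  | succ n ih =>
    have h' : ∀ k ≤ 2*n, poch (2*a-2) k ≠ 0 := fun k hk => h k (by omega)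
    obtain ⟨hA, hW⟩ := ih h'
    set A := ∑ k ∈ range (2*n+1), FA a n k with hAdef
    set W := ∑ k ∈ range (2*n+1), (k:ℂ) * FA a n k with hWdef
    have e2 : 2*(n+1)+1 = 2*n+3 := by omega
    rw [e2]
    set A' := ∑ k ∈ range (2*n+3), FA a (n+1) k with hA'def
    set W' := ∑ k ∈ range (2*n+3), (k:ℂ) * FA a (n+1) k with hW'def
    -- extended sums at level n
    have hAe : ∑ k ∈ range (2*n+3), FA a n k = A := by
      rw [sum_range_succ, sum_range_succ, FA_top_zero a n _ (by omega),
        FA_top_zero a n _ (by omega)]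
      simp
      rfl
    have hWe : ∑ k ∈ range (2*n+3), (k:ℂ) * FA a n k = W := by
      rw [sum_range_succ, sum_range_succ, FA_top_zero a n _ (by omega),
        FA_top_zero a n _ (by omega)]
      simp
      rfl
    -- nonvanishing facts
    have hz1 : 2*a+2*(n:ℂ)-1 ≠ 0 := by
      have hp := poch_factor_ne_zero (h (2*n+2) (by omega)) (i := 2*n+1) (by omega)
      push_cast at hp
      intro hc; apply hp; linear_combination hc
    have hz2 : (a-1+(n:ℂ)) ≠ 0 := by
      have hp := poch_factor_ne_zero (h (2*n+2) (by omega)) (i := 2*n) (by omega)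
      push_cast at hp
      intro hc; apply hp; linear_combination 2*hc
    have hn1 : (2*(n:ℂ)+1) ≠ 0 := by
      have : ((2*n+1:ℕ):ℂ) ≠ 0 := Nat.cast_ne_zero.mpr (by omega)
      push_cast at this; exact this
    have hn2 : (2*(n:ℂ)+2) ≠ 0 := by
      have : ((2*n+2:ℕ):ℂ) ≠ 0 := Nat.cast_ne_zero.mpr (by omega)
      push_cast at this; exact this
    -- Equation 1 (telescoping of certificate I)
    have ptI : ∀ k ∈ range (2*n+3),
        (2*(n:ℂ)+1)*(2*n+2) * FA a n k - (2*n+2)*(2*a+2*n-1) * FA a (n+1) k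
        = (((k+1:ℕ)):ℂ)*(((k+1:ℕ):ℂ)+2*a-3) * FA a (n+1) (k+1)
          - (k:ℂ)*((k:ℂ)+2*a-3) * FA a (n+1) k := by
      intro k hk
      rw [mem_range] at hk
      by_cases hk2 : k ≤ 2*n+1
      · have hv : poch (2*a-2) (k+1) ≠ 0 := h (k+1) (by omega)
        have := keyI a n k hv
        push_cast
        linear_combination this
      · have hke : k = 2*n+2 := by omega
        subst hke
        rw [FA_top_zero a n (2*n+2) (by omega), FA_top_zero a (n+1) (2*n+2+1) (by omega)]
        push_cast
        ring
    have Eq1 : (2*(n:ℂ)+1)*(2*n+2) * A - (2*n+2)*(2*a+2*n-1) * A' = 0 := by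
      have tel := Finset.sum_range_sub
        (fun k => (k:ℂ)*((k:ℂ)+2*a-3) * FA a (n+1) k) (2*n+3)
      have lhs := Finset.sum_congr rfl ptI
      rw [tel] at lhs
      rw [Finset.sum_sub_distrib, ← Finset.mul_sum, ← Finset.mul_sum, hAe] at lhs
      rw [FA_top_zero a (n+1) _ (by omega)] at lhs
      push_cast at lhs ⊢
      linear_combination lhs
    have key : (2*a+2*(n:ℂ)-1) * A' = (2*(n:ℂ)+1) * A := by
      have h0 : (2*(n:ℂ)+2) * ((2*a+2*(n:ℂ)-1) * A')
          = (2*(n:ℂ)+2) * ((2*(n:ℂ)+1) * A) := by linear_combination -Eq1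
      exact mul_left_cancel₀ hn2 h0
    -- Goal 1
    have goal1 : A' * poch (a-1/2) (n+1) = poch ((1:ℂ)/2) (n+1) := by
      rw [poch_succ, poch_succ]
      linear_combination (poch (a-1/2) n / 2) * key + ((2*(n:ℂ)+1)/2) * hA
    -- Equation 2 (telescoping of certificate II)
    have ptII : ∀ k ∈ range (2*n+3),
        (2*(n:ℂ)+1)*(2*n+2)*((k:ℂ)-2*a+5) * FA a n k
          + ((2*(n:ℂ)+2)*(4*(a-1)^2+(4*(n:ℂ)-2)*(a-1)-3*(2*(n:ℂ)+1))
              - 2*(2*(n:ℂ)+1)*(a-1+(n:ℂ))*(k:ℂ)) * FA a (n+1) k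
        = (((k+1:ℕ)):ℂ)*((((k+1:ℕ)):ℂ)^2-(2*a-3)^2) * FA a (n+1) (k+1)
          - (k:ℂ)*((k:ℂ)^2-(2*a-3)^2) * FA a (n+1) k := by
      intro k hk
      rw [mem_range] at hk
      by_cases hk2 : k ≤ 2*n+1
      · have hv : poch (2*a-2) (k+1) ≠ 0 := h (k+1) (by omega)
        have := keyII a n k hv
        push_cast
        linear_combination this
      · have hke : k = 2*n+2 := by omega
        subst hke
        rw [FA_top_zero a n (2*n+2) (by omega), FA_top_zero a (n+1) (2*n+2+1) (by omega)]
        push_cast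
        ring
    have Eq2 : (2*(n:ℂ)+1)*(2*n+2) * W + (2*(n:ℂ)+1)*(2*n+2)*(-2*a+5) * A
        + ((2*(n:ℂ)+2)*(4*(a-1)^2+(4*(n:ℂ)-2)*(a-1)-3*(2*(n:ℂ)+1))) * A'
        - 2*(2*(n:ℂ)+1)*(a-1+(n:ℂ)) * W' = 0 := by
      have tel := Finset.sum_range_sub
        (fun k => (k:ℂ)*((k:ℂ)^2-(2*a-3)^2) * FA a (n+1) k) (2*n+3)
      have lhs := Finset.sum_congr rfl ptII
      rw [tel] at lhs
      have expand : ∀ k ∈ range (2*n+3),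
          (2*(n:ℂ)+1)*(2*n+2)*((k:ℂ)-2*a+5) * FA a n k
            + ((2*(n:ℂ)+2)*(4*(a-1)^2+(4*(n:ℂ)-2)*(a-1)-3*(2*(n:ℂ)+1))
                - 2*(2*(n:ℂ)+1)*(a-1+(n:ℂ))*(k:ℂ)) * FA a (n+1) k
          = (2*(n:ℂ)+1)*(2*n+2) * ((k:ℂ) * FA a n k)
            + (2*(n:ℂ)+1)*(2*n+2)*(-2*a+5) * FA a n k
            + ((2*(n:ℂ)+2)*(4*(a-1)^2+(4*(n:ℂ)-2)*(a-1)-3*(2*(n:ℂ)+1))) * FA a (n+1) k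
            - 2*(2*(n:ℂ)+1)*(a-1+(n:ℂ)) * ((k:ℂ) * FA a (n+1) k) := by
        intro k _; ring
      rw [Finset.sum_congr rfl expand] at lhs
      rw [Finset.sum_sub_distrib, Finset.sum_add_distrib, Finset.sum_add_distrib,
        ← Finset.mul_sum, ← Finset.mul_sum, ← Finset.mul_sum, ← Finset.mul_sum,
        hAe, hWe] at lhs
      rw [FA_top_zero a (n+1) _ (by omega)] at lhs
      push_cast at lhs ⊢
      linear_combination lhs
    -- derive W' = (2n+2) A'
    have main0 : ((2*a+2*(n:ℂ)-1) * (2*(2*(n:ℂ)+1)*(a-1+(n:ℂ)))) * (W' - (2*(n:ℂ)+2)*A') = 0 := by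
      linear_combination (-(2*a+2*(n:ℂ)-1)) * Eq2
        + (2*a+2*(n:ℂ)-1)*((2*(n:ℂ)+1)*(2*(n:ℂ)+2)) * hW
        + (((2*(n:ℂ)+2)*(4*(a-1)^2+(4*(n:ℂ)-2)*(a-1)-3*(2*(n:ℂ)+1)))
            - (2*(n:ℂ)+2)*(2*(2*(n:ℂ)+1)*(a-1+(n:ℂ)))) * key
    have hδ : ((2*a+2*(n:ℂ)-1) * (2*(2*(n:ℂ)+1)*(a-1+(n:ℂ)))) ≠ 0 :=
      mul_ne_zero hz1 (mul_ne_zero (mul_ne_zero two_ne_zero hn1) hz2)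
    have goal2 : W' = (2*(n:ℂ)+2) * A' := by
      have hX := (mul_eq_zero.mp main0).resolve_left hδ
      linear_combination hX
    refine ⟨goal1, ?_⟩
    push_cast
    linear_combination goal2


theorem twoF1_neg2n_a_twoAm2 (n : ℕ) (a : ℂ) (h : ∀ k ≤ 2 * n, poch (2 * a - 2) k ≠ 0)
    (ha : a - 1 ≠ 0) :
    ∑ k ∈ range (2 * n + 1),
        poch (-(2 * n : ℂ)) k * poch a k * 2 ^ k / (poch (2 * a - 2) k * (k.factorial : ℂ))
      = poch (1 / 2) n / poch (a - 1 / 2) n * (1 + 2 * n / (a - 1)) := by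
  obtain ⟨hA, hW⟩ := AW a n h
  set A := ∑ k ∈ range (2*n+1), FA a n k with hAdef
  set W := ∑ k ∈ range (2*n+1), (k:ℂ) * FA a n k with hWdef
  -- the summand versus FA
  have hterm : ∀ k : ℕ,
      (a-1) * (poch (-(2 * (n:ℂ))) k * poch a k * 2 ^ k / (poch (2*a-2) k * (k.factorial : ℂ)))
      = (a-1) * FA a n k + (k:ℂ) * FA a n k := by
    intro k
    have hpa : (a-1) * poch a k = poch (a-1) k * ((a-1) + k) := by
      have h1 : poch (a-1) (k+1) = poch (a-1) k * ((a-1)+(k:ℂ)) := poch_succ _ k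
      have h2 : poch (a-1) (k+1) = (a-1) * poch ((a-1)+1) k := poch_succ_left _ k
      have e : (a-1)+1 = a := by ring
      rw [e] at h2
      rw [← h2, h1]
    have hnum : (a-1) * (poch (-(2*(n:ℂ))) k * poch a k * 2^k)
        = ((a-1) + k) * (poch (-(2*(n:ℂ))) k * poch (a-1) k * 2^k) := by
      linear_combination (poch (-(2*(n:ℂ))) k * 2^k) * hpa
    simp only [FA]
    rw [mul_div_assoc', hnum]
    rw [mul_div_assoc]
    ring
  -- sum version
  have hsum : (a-1) * (∑ k ∈ range (2*n+1),
      poch (-(2 * (n:ℂ))) k * poch a k * 2 ^ k / (poch (2*a-2) k * (k.factorial : ℂ)))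
      = (a-1) * A + W := by
    rw [Finset.mul_sum]
    rw [Finset.sum_congr rfl (fun k _ => hterm k)]
    rw [Finset.sum_add_distrib, ← Finset.mul_sum]
  -- nonvanishing of poch (a-1/2) n
  have hQ : poch (a-1/2) n ≠ 0 := by
    rw [poch_eq_prod]
    rw [Finset.prod_ne_zero_iff]
    intro i hi
    rw [mem_range] at hi
    have hp := poch_factor_ne_zero (h (2*n) le_rfl) (i := 2*i+1) (by omega)
    push_cast at hp
    intro hc; apply hp; linear_combination 2*hc
  set S := ∑ k ∈ range (2*n+1),
      poch (-(2 * (n:ℂ))) k * poch a k * 2 ^ k / (poch (2*a-2) k * (k.factorial : ℂ)) with hSdef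
  have hfin : S * ((a-1) * poch (a-1/2) n)
      = poch ((1:ℂ)/2) n * (a - 1 + 2*n) := by
    calc S * ((a-1) * poch (a-1/2) n) = ((a-1) * S) * poch (a-1/2) n := by ring
    _ = ((a-1)*A + W) * poch (a-1/2) n := by rw [hsum]
    _ = ((a-1)*A + 2*n*A) * poch (a-1/2) n := by rw [hW]
    _ = (a-1+2*(n:ℂ)) * (A * poch (a-1/2) n) := by ring
    _ = (a-1+2*(n:ℂ)) * poch ((1:ℂ)/2) n := by rw [hA]
    _ = poch ((1:ℂ)/2) n * (a - 1 + 2*n) := by ring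
  show S = poch (1/2) n / poch (a - 1/2) n * (1 + 2 * n / (a - 1))
  have h1 : 1 + 2*(n:ℂ)/(a-1) = (a-1+2*n)/(a-1) := by
    rw [eq_div_iff ha]; rw [add_mul, div_mul_cancel₀ _ ha]; ring
  rw [h1, div_mul_div_comm, eq_div_iff (mul_ne_zero hQ ha)]
  linear_combination hfin
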